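/- Let n ≥ 2 and let 2 ≤ i, j ≤ n with i ≡ j (mod 2). Then the commutator [σ_i, σ_j] of the generators σ_i := σ_{1,i} and σ_j := σ_{1,j} of the cactus group J_n belongs to Γ_3(J_n). -/

import Mathlib

/-- Generators of the cactus group `J n`: pairs `(p, q)` with `1 ≤ p < q ≤ n`. -/
abbrev CactusGen (n : ℕ) := {pq : ℕ × ℕ // 1 ≤ pq.1 ∧ pq.1 < pq.2 ∧ pq.2 ≤ n}

/-- The defining relators of the standard presentation of the cactus group `J n`:
`σ_{p,q}² = 1`; `σ_{p,q}σ_{r,s} = σ_{r,s}σ_{p,q}` when `[p,q] ∩ [r,s] = ∅`;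
and `σ_{p,q}σ_{r,s} = σ_{p+q-s,p+q-r}σ_{p,q}` when `[r,s] ⊆ [p,q]`. -/
def cactusRels (n : ℕ) : Set (FreeGroup (CactusGen n)) :=
  { w | (∃ g : CactusGen n, w = FreeGroup.of g ^ 2) ∨
    (∃ g h : CactusGen n, (g.1.2 < h.1.1 ∨ h.1.2 < g.1.1) ∧
      w = FreeGroup.of g * FreeGroup.of h * (FreeGroup.of h * FreeGroup.of g)⁻¹) ∨
    (∃ g h k : CactusGen n, g.1.1 ≤ h.1.1 ∧ h.1.2 ≤ g.1.2 ∧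
      k.1.1 = g.1.1 + g.1.2 - h.1.2 ∧ k.1.2 = g.1.1 + g.1.2 - h.1.1 ∧
      w = FreeGroup.of g * FreeGroup.of h * (FreeGroup.of k * FreeGroup.of g)⁻¹) }

/-- The cactus group `J n`, as a presented group. -/
abbrev CactusGroup (n : ℕ) := PresentedGroup (cactusRels n)

/-- The generator `σ_{p,q}` of the cactus group `J n` (junk value `1` for invalid indices). -/
def cactusσ (n p q : ℕ) : CactusGroup n :=
  if h : 1 ≤ p ∧ p < q ∧ q ≤ n then PresentedGroup.of ⟨(p, q), h⟩ else 1

open scoped commutatorElement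

/-- Any element of `cactusRels n` maps to `1` in the cactus group. -/
lemma cactus_rel_eq_one {n : ℕ} {w : FreeGroup (CactusGen n)} (hw : w ∈ cactusRels n) :
    (QuotientGroup.mk w : CactusGroup n) = 1 :=
  (QuotientGroup.eq_one_iff w).mpr (Subgroup.subset_normalClosure hw)

/-- The nested-interval relation in the cactus group. -/
lemma cactus_rel_nested {n : ℕ} (g h k : CactusGen n)
    (h1 : g.1.1 ≤ h.1.1) (h2 : h.1.2 ≤ g.1.2)
    (h3 : k.1.1 = g.1.1 + g.1.2 - h.1.2) (h4 : k.1.2 = g.1.1 + g.1.2 - h.1.1) :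
    (PresentedGroup.of g : CactusGroup n) * PresentedGroup.of h =
      PresentedGroup.of k * PresentedGroup.of g := by
  have hw : (FreeGroup.of g * FreeGroup.of h * (FreeGroup.of k * FreeGroup.of g)⁻¹)
      ∈ cactusRels n := Or.inr (Or.inr ⟨g, h, k, h1, h2, h3, h4, rfl⟩)
  have h1 : (QuotientGroup.mk (FreeGroup.of g * FreeGroup.of h *
      (FreeGroup.of k * FreeGroup.of g)⁻¹) : CactusGroup n) = 1 := cactus_rel_eq_one hw
  have h2 : (PresentedGroup.of g : CactusGroup n) * PresentedGroup.of h *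
      ((PresentedGroup.of k : CactusGroup n) * PresentedGroup.of g)⁻¹ = 1 := h1
  exact mul_inv_eq_one.mp h2

/-- The key case `i ≤ j`. -/
lemma cactus_key {n i j : ℕ}
    (hi : 2 ≤ i) (hj' : j ≤ n) (hij : i ≤ j) (hpar : i % 2 = j % 2) :
    ⁅cactusσ n 1 i, cactusσ n 1 j⁆ ∈ (⊤ : Subgroup (CactusGroup n)).lowerCentralSeries 2 := by
  set m := (j - i) / 2 with hm
  have hmm : 2 * m = j - i := by omega
  -- generators
  have hga : 1 ≤ 1 ∧ 1 < i ∧ i ≤ n := by omega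
  have hgb : 1 ≤ 1 ∧ 1 < j ∧ j ≤ n := by omega
  have hgt : 1 ≤ m + 1 ∧ m + 1 < m + i ∧ m + i ≤ n := by omega
  have hgu : 1 ≤ 1 ∧ 1 < m + i ∧ m + i ≤ n := by omega
  set ga : CactusGen n := ⟨(1, i), hga⟩
  set gb : CactusGen n := ⟨(1, j), hgb⟩
  set gt : CactusGen n := ⟨(m + 1, m + i), hgt⟩
  set gu : CactusGen n := ⟨(1, m + i), hgu⟩
  set a : CactusGroup n := PresentedGroup.of ga
  set b : CactusGroup n := PresentedGroup.of gb
  set t : CactusGroup n := PresentedGroup.of gt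
  set u : CactusGroup n := PresentedGroup.of gu
  -- σ_{1,j} commutes with the centered interval σ_{m+1, m+i}
  have R1 : b * t = t * b := cactus_rel_nested gb gt gt
    (by show (1:ℕ) ≤ m + 1; omega) (by show m + i ≤ j; omega)
    (by show m + 1 = 1 + j - (m + i); omega) (by show m + i = 1 + j - (m + 1); omega)
  -- σ_{1,m+i} conjugates σ_{1,i} to σ_{m+1,m+i}
  have R2 : u * a = t * u := cactus_rel_nested gu ga gt
    (by show (1:ℕ) ≤ 1; omega) (by show i ≤ m + i; omega)
    (by show m + 1 = 1 + (m + i) - i; omega) (by show m + i = 1 + (m + i) - 1; omega)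
  have ha : a = t * ⁅t⁻¹, u⁻¹⁆ := by
    have h5 : a = u⁻¹ * (t * u) := eq_inv_mul_iff_mul_eq.mpr R2
    rw [commutatorElement_def, h5]; group
  have hk : ⁅t⁻¹, u⁻¹⁆ ∈ (⊤ : Subgroup (CactusGroup n)).lowerCentralSeries 1 :=
    Subgroup.commutator_mem_commutator (Subgroup.mem_top _) (Subgroup.mem_top _)
  have htb : ⁅t, b⁆ = 1 := by
    rw [commutatorElement_def, R1.symm]; group
  have hexp : ⁅a, b⁆ = t * ⁅⁅t⁻¹, u⁻¹⁆, b⁆ * t⁻¹ * ⁅t, b⁆ := by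
    rw [ha]; group
  have hmem : ⁅⁅t⁻¹, u⁻¹⁆, b⁆ ∈ (⊤ : Subgroup (CactusGroup n)).lowerCentralSeries 2 :=
    Subgroup.commutator_mem_commutator hk (Subgroup.mem_top _)
  have hσa : cactusσ n 1 i = a := by rw [cactusσ, dif_pos hga]
  have hσb : cactusσ n 1 j = b := by rw [cactusσ, dif_pos hgb]
  rw [hσa, hσb, hexp, htb, mul_one]
  exact (Subgroup.lowerCentralSeries_normal ⊤ 2).conj_mem _ hmem t

/-- If `2 ≤ i, j ≤ n` and `i ≡ j (mod 2)`, then the commutator `[σ_{1,i}, σ_{1,j}]`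
belongs to `Γ₃(J_n) = lowerCentralSeries (CactusGroup n) 2`. -/
theorem cactus_commutator_in_gamma3_of_same_parity (n i j : ℕ) (hn : 2 ≤ n)
    (hi : 2 ≤ i) (hi' : i ≤ n) (hj : 2 ≤ j) (hj' : j ≤ n) (hpar : i % 2 = j % 2) :
    ⁅cactusσ n 1 i, cactusσ n 1 j⁆ ∈ (⊤ : Subgroup (CactusGroup n)).lowerCentralSeries 2 := by
  rcases le_total i j with h | h
  · exact cactus_key hi hj' h hpar
  · have := cactus_key hj hi' h hpar.symm
    rw [← commutatorElement_inv]
    exact Subgroup.inv_mem _ this
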